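/- Let p be a prime with p ≡ 1 (mod 4), let C_p = {n ∈ ZMod p : n, n+1, n+2 are all nonzero squares in ZMod p}, and set k = 2 if p ≡ 1 (mod 8) and k = 1 if p ≡ 5 (mod 8). Then the set of 3×3 matrices M over ZMod p for which there exists a primitive magic square of squares with values a, b, c, d, e, f, g, h, i such that p divides e and M equals the entrywise reduction modulo p of the grid (a², b², c²; d², e², f²; g², h², i²), has cardinality at most (p−1)·(|C_p| + 2k). -/

import Mathlib

/-- A magic square of squares: integers `a,…,i` whose squares, arranged in a
3×3 grid with rows `(a²,b²,c²)`, `(d²,e²,f²)`, `(g²,h²,i²)`, are pairwise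
distinct and all rows, columns and both main diagonals sum to `T`. -/
def IsMagicSquareOfSquares (a b c d e f g h i T : ℤ) : Prop :=
  ([a^2, b^2, c^2, d^2, e^2, f^2, g^2, h^2, i^2] : List ℤ).Pairwise (· ≠ ·) ∧
  a^2 + b^2 + c^2 = T ∧ d^2 + e^2 + f^2 = T ∧ g^2 + h^2 + i^2 = T ∧
  a^2 + d^2 + g^2 = T ∧ b^2 + e^2 + h^2 = T ∧ c^2 + f^2 + i^2 = T ∧
  a^2 + e^2 + i^2 = T ∧ c^2 + e^2 + g^2 = T

/-- A magic square of squares is primitive if the gcd of its nine entries is 1. -/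
def IsPrimitive (a b c d e f g h i : ℤ) : Prop :=
  Int.gcd (a^2) (Int.gcd (b^2) (Int.gcd (c^2) (Int.gcd (d^2) (Int.gcd (e^2)
    (Int.gcd (f^2) (Int.gcd (g^2) (Int.gcd (h^2) (i^2)))))))) = 1

lemma aux_two_sq {p : ℕ} [Fact p.Prime] {x w : ZMod p} (hx : x ≠ 0)
    (h1 : IsSquare x) (h2 : IsSquare w) (hw : w = 2 * x) : IsSquare (2 : ZMod p) := by
  obtain ⟨r, hr⟩ := h2
  obtain ⟨s, hs⟩ := h1
  have hs0 : s ≠ 0 := fun h => hx (by rw [hs, h, mul_zero])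
  refine ⟨r * s⁻¹, ?_⟩
  field_simp
  linear_combination hr - hw - 2 * hs

theorem residue_class_count_bound (p : ℕ) (hp : p.Prime) (hp1 : p % 4 = 1) :
    let C : Set (ZMod p) := {n | (n ≠ 0 ∧ IsSquare n) ∧
      (n + 1 ≠ 0 ∧ IsSquare (n + 1)) ∧ (n + 2 ≠ 0 ∧ IsSquare (n + 2))}
    let k : ℕ := if p % 8 = 1 then 2 else 1
    let S : Set (Matrix (Fin 3) (Fin 3) (ZMod p)) :=
      {M | ∃ a b c d e f g h i T : ℤ,
        IsMagicSquareOfSquares a b c d e f g h i T ∧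
        IsPrimitive a b c d e f g h i ∧ (p : ℤ) ∣ e ∧
        M = !![((a^2 : ℤ) : ZMod p), ((b^2 : ℤ) : ZMod p), ((c^2 : ℤ) : ZMod p);
               ((d^2 : ℤ) : ZMod p), ((e^2 : ℤ) : ZMod p), ((f^2 : ℤ) : ZMod p);
               ((g^2 : ℤ) : ZMod p), ((h^2 : ℤ) : ZMod p), ((i^2 : ℤ) : ZMod p)]}
    S.ncard ≤ (p - 1) * (C.ncard + 2 * k) := by
  intro C k S
  haveI : Fact p.Prime := ⟨hp⟩
  haveI : NeZero p := ⟨hp.ne_zero⟩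
  have hp2 : 2 ≤ p := hp.two_le
  have hneg1 : IsSquare (-1 : ZMod p) := ZMod.exists_sq_eq_neg_one_iff.2 (by omega)
  have h2ns : p % 8 ≠ 1 → ¬ IsSquare (2 : ZMod p) := by
    intro h8 h2
    have := (ZMod.exists_sq_eq_two_iff (p := p) (by omega)).1 h2
    omega
  classical
  -- key structural lemma
  have key : ∀ M ∈ S, M = !![M 0 0, M 0 1, M 0 2;
        M 0 2 - M 0 0, 0, M 0 0 - M 0 2; -(M 0 2), -(M 0 1), -(M 0 0)] ∧
      M 0 0 + M 0 1 + M 0 2 = 0 ∧ IsSquare (M 0 0) ∧ IsSquare (M 0 1) ∧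
      IsSquare (M 0 2) ∧ IsSquare (M 0 0 - M 0 2) ∧
      ¬(M 0 0 = 0 ∧ M 0 1 = 0 ∧ M 0 2 = 0) := by
    rintro M ⟨a, b, c, d, e, f, g, h, i, T, ⟨-, h1, h2, h3, h4, h5, h6, h7, h8⟩,
      hprim, hdvd, hM⟩
    have hd : d ^ 2 = e ^ 2 + c ^ 2 - a ^ 2 := by linarith
    have hf : f ^ 2 = e ^ 2 + a ^ 2 - c ^ 2 := by linarith
    have hg : g ^ 2 = 2 * e ^ 2 - c ^ 2 := by linarith
    have hh : h ^ 2 = 2 * e ^ 2 - b ^ 2 := by linarith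
    have hi : i ^ 2 = 2 * e ^ 2 - a ^ 2 := by linarith
    have hsum : a ^ 2 + b ^ 2 + c ^ 2 = 3 * e ^ 2 := by linarith
    have he0 : ((e : ℤ) : ZMod p) = 0 := (ZMod.intCast_zmod_eq_zero_iff_dvd e p).2 hdvd
    have hde : ((d : ℤ) : ZMod p) ^ 2 = ((c : ℤ) : ZMod p) ^ 2 - ((a : ℤ) : ZMod p) ^ 2 := by
      have h' : ((d ^ 2 : ℤ) : ZMod p) = ((e ^ 2 + c ^ 2 - a ^ 2 : ℤ) : ZMod p) := by rw [hd]
      push_cast at h'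
      rw [he0] at h'
      linear_combination h'
    have hfe : ((f : ℤ) : ZMod p) ^ 2 = ((a : ℤ) : ZMod p) ^ 2 - ((c : ℤ) : ZMod p) ^ 2 := by
      have h' : ((f ^ 2 : ℤ) : ZMod p) = ((e ^ 2 + a ^ 2 - c ^ 2 : ℤ) : ZMod p) := by rw [hf]
      push_cast at h'
      rw [he0] at h'
      linear_combination h'
    have hge : ((g : ℤ) : ZMod p) ^ 2 = -((c : ℤ) : ZMod p) ^ 2 := by
      have h' : ((g ^ 2 : ℤ) : ZMod p) = ((2 * e ^ 2 - c ^ 2 : ℤ) : ZMod p) := by rw [hg]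
      push_cast at h'
      rw [he0] at h'
      linear_combination h'
    have hhe : ((h : ℤ) : ZMod p) ^ 2 = -((b : ℤ) : ZMod p) ^ 2 := by
      have h' : ((h ^ 2 : ℤ) : ZMod p) = ((2 * e ^ 2 - b ^ 2 : ℤ) : ZMod p) := by rw [hh]
      push_cast at h'
      rw [he0] at h'
      linear_combination h'
    have hie : ((i : ℤ) : ZMod p) ^ 2 = -((a : ℤ) : ZMod p) ^ 2 := by
      have h' : ((i ^ 2 : ℤ) : ZMod p) = ((2 * e ^ 2 - a ^ 2 : ℤ) : ZMod p) := by rw [hi]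
      push_cast at h'
      rw [he0] at h'
      linear_combination h'
    have hsume : ((a : ℤ) : ZMod p) ^ 2 + ((b : ℤ) : ZMod p) ^ 2 + ((c : ℤ) : ZMod p) ^ 2
        = 0 := by
      have h' : ((a ^ 2 + b ^ 2 + c ^ 2 : ℤ) : ZMod p) = ((3 * e ^ 2 : ℤ) : ZMod p) := by
        rw [hsum]
      push_cast at h'
      rw [he0] at h'
      linear_combination h'
    have e00 : M 0 0 = ((a : ℤ) : ZMod p) ^ 2 := by rw [hM]; simp
    have e01 : M 0 1 = ((b : ℤ) : ZMod p) ^ 2 := by rw [hM]; simp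
    have e02 : M 0 2 = ((c : ℤ) : ZMod p) ^ 2 := by rw [hM]; simp
    refine ⟨?_, ?_, ?_, ?_, ?_, ?_, ?_⟩
    · rw [hM]
      ext r s
      fin_cases r <;> fin_cases s <;>
        simp [hde, hfe, hge, hhe, hie, he0]
    · rw [e00, e01, e02]
      linear_combination hsume
    · rw [e00]
      exact ⟨_, by ring⟩
    · rw [e01]
      exact ⟨_, by ring⟩
    · rw [e02]
      exact ⟨_, by ring⟩
    · rw [e00, e02, ← hfe]
      exact ⟨_, by ring⟩
    · rintro ⟨h00, h01, h02⟩
      rw [e00] at h00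
      rw [e01] at h01
      rw [e02] at h02
      have da2 : (p : ℤ) ∣ a ^ 2 := by
        rw [← ZMod.intCast_zmod_eq_zero_iff_dvd]
        push_cast
        exact h00
      have db2 : (p : ℤ) ∣ b ^ 2 := by
        rw [← ZMod.intCast_zmod_eq_zero_iff_dvd]
        push_cast
        exact h01
      have dc2 : (p : ℤ) ∣ c ^ 2 := by
        rw [← ZMod.intCast_zmod_eq_zero_iff_dvd]
        push_cast
        exact h02
      have de2 : (p : ℤ) ∣ e ^ 2 := dvd_pow hdvd two_ne_zero
      have dd2 : (p : ℤ) ∣ d ^ 2 := by rw [hd]; exact dvd_sub (dvd_add de2 dc2) da2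
      have df2 : (p : ℤ) ∣ f ^ 2 := by rw [hf]; exact dvd_sub (dvd_add de2 da2) dc2
      have dg2 : (p : ℤ) ∣ g ^ 2 := by rw [hg]; exact dvd_sub (de2.mul_left 2) dc2
      have dh2 : (p : ℤ) ∣ h ^ 2 := by rw [hh]; exact dvd_sub (de2.mul_left 2) db2
      have di2 : (p : ℤ) ∣ i ^ 2 := by rw [hi]; exact dvd_sub (de2.mul_left 2) da2
      have hg1 : (p : ℤ) ∣ (Int.gcd (a^2) (Int.gcd (b^2) (Int.gcd (c^2) (Int.gcd (d^2)
          (Int.gcd (e^2) (Int.gcd (f^2) (Int.gcd (g^2) (Int.gcd (h^2) (i^2))))))))) :=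
        Int.dvd_coe_gcd da2 (Int.dvd_coe_gcd db2 (Int.dvd_coe_gcd dc2 (Int.dvd_coe_gcd dd2 (Int.dvd_coe_gcd de2
          (Int.dvd_coe_gcd df2 (Int.dvd_coe_gcd dg2 (Int.dvd_coe_gcd dh2 di2)))))))
      rw [hprim] at hg1
      have hle : (p : ℤ) ≤ 1 := Int.le_of_dvd one_pos (by simpa using hg1)
      omega
  -- injectivity from first row
  have inj3 : ∀ M ∈ S, ∀ M' ∈ S, M 0 0 = M' 0 0 → M 0 1 = M' 0 1 → M 0 2 = M' 0 2 →
      M = M' := by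
    intro M hM M' hM' e1 e2 e3
    rw [(key M hM).1, (key M' hM').1, e1, e2, e3]
  -- the nonzero set
  set N : Set (ZMod p) := {u | u ≠ 0} with hNdef
  have hNcard : N.ncard = p - 1 := by
    have h2 : (0 : ZMod p) ∉ N := by simp [hNdef]
    have h3 := Set.ncard_insert_of_notMem h2 (Set.toFinite N)
    have h1 : (insert (0 : ZMod p) N) = Set.univ := by
      ext u
      simp [hNdef]
      tauto
    rw [h1, Set.ncard_univ, Nat.card_eq_fintype_card, ZMod.card] at h3
    omega
  set S1 := S ∩ {M : Matrix (Fin 3) (Fin 3) (ZMod p) | M 0 0 = 0} with hS1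
  set S2 := S ∩ {M : Matrix (Fin 3) (Fin 3) (ZMod p) | M 0 0 ≠ 0 ∧ M 0 2 = 0} with hS2
  set S3 := S ∩ {M : Matrix (Fin 3) (Fin 3) (ZMod p) |
    M 0 0 ≠ 0 ∧ M 0 2 ≠ 0 ∧ M 0 1 = 0} with hS3
  set S4 := S ∩ {M : Matrix (Fin 3) (Fin 3) (ZMod p) |
    M 0 0 ≠ 0 ∧ M 0 2 ≠ 0 ∧ M 0 1 ≠ 0 ∧ M 0 0 = M 0 2} with hS4
  set S5 := S ∩ {M : Matrix (Fin 3) (Fin 3) (ZMod p) |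
    M 0 0 ≠ 0 ∧ M 0 2 ≠ 0 ∧ M 0 1 ≠ 0 ∧ M 0 0 ≠ M 0 2} with hS5
  have hcover : S ⊆ S1 ∪ (S2 ∪ (S3 ∪ (S4 ∪ S5))) := by
    intro M hM
    simp only [hS1, hS2, hS3, hS4, hS5, Set.mem_union, Set.mem_inter_iff,
      Set.mem_setOf_eq, hM, true_and]
    tauto
  have hb1 : S1.ncard ≤ p - 1 := by
    rw [← hNcard]
    apply Set.ncard_le_ncard_of_injOn (fun M => M 0 1)
    · rintro M ⟨hMS, hx0⟩
      replace hx0 : M 0 0 = 0 := hx0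
      obtain ⟨-, hsum, -, -, -, -, hnz⟩ := key M hMS
      show M 0 1 ≠ 0
      intro hy0
      exact hnz ⟨hx0, hy0, by rw [hx0, hy0] at hsum; simpa using hsum⟩
    · rintro M ⟨hMS, hx0⟩ M' ⟨hMS', hx0'⟩ hy
      replace hx0 : M 0 0 = 0 := hx0
      replace hx0' : M' 0 0 = 0 := hx0'
      replace hy : M 0 1 = M' 0 1 := hy
      have hsum := (key M hMS).2.1
      have hsum' := (key M' hMS').2.1
      refine inj3 M hMS M' hMS' (hx0.trans hx0'.symm) hy ?_
      have : M 0 2 = -(M 0 0) - M 0 1 := by linear_combination hsum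
      have that : M' 0 2 = -(M' 0 0) - M' 0 1 := by linear_combination hsum'
      rw [this, that, hx0, hx0', hy]
  have hb2 : S2.ncard ≤ p - 1 := by
    rw [← hNcard]
    apply Set.ncard_le_ncard_of_injOn (fun M => M 0 0)
    · rintro M ⟨hMS, hx0, hz0⟩
      exact hx0
    · rintro M ⟨hMS, hx0, hz0⟩ M' ⟨hMS', hx0', hz0'⟩ hx
      replace hx : M 0 0 = M' 0 0 := hx
      have hsum := (key M hMS).2.1
      have hsum' := (key M' hMS').2.1
      refine inj3 M hMS M' hMS' hx ?_ (hz0.trans hz0'.symm)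
      have : M 0 1 = -(M 0 0) - M 0 2 := by linear_combination hsum
      have that : M' 0 1 = -(M' 0 0) - M' 0 2 := by linear_combination hsum'
      rw [this, that, hx, hz0, hz0']
  have hb3 : S3.ncard ≤ if p % 8 = 1 then p - 1 else 0 := by
    by_cases h8 : p % 8 = 1
    · rw [if_pos h8, ← hNcard]
      apply Set.ncard_le_ncard_of_injOn (fun M => M 0 0)
      · rintro M ⟨hMS, hx0, -, -⟩
        exact hx0
      · rintro M ⟨hMS, hx0, hz0, hy0⟩ M' ⟨hMS', hx0', hz0', hy0'⟩ hx
        replace hx : M 0 0 = M' 0 0 := hx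
        have hsum := (key M hMS).2.1
        have hsum' := (key M' hMS').2.1
        refine inj3 M hMS M' hMS' hx (hy0.trans hy0'.symm) ?_
        have : M 0 2 = -(M 0 0) - M 0 1 := by linear_combination hsum
        have that : M' 0 2 = -(M' 0 0) - M' 0 1 := by linear_combination hsum'
        rw [this, that, hx, hy0, hy0']
    · rw [if_neg h8]
      have : S3 = ∅ := by
        ext M
        simp only [Set.mem_empty_iff_false, iff_false]
        rintro ⟨hMS, hx0, hz0, hy0⟩
        obtain ⟨-, hsum, hxs, -, -, hxzs, -⟩ := key M hMS
        have hz : M 0 2 = -(M 0 0) := by rw [hy0] at hsum; linear_combination hsum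
        exact h2ns h8 (aux_two_sq hx0 hxs hxzs (by rw [hz]; ring))
      rw [this, Set.ncard_empty]
  have hb4 : S4.ncard ≤ if p % 8 = 1 then p - 1 else 0 := by
    by_cases h8 : p % 8 = 1
    · rw [if_pos h8, ← hNcard]
      apply Set.ncard_le_ncard_of_injOn (fun M => M 0 0)
      · rintro M ⟨hMS, hx0, -, -, -⟩
        exact hx0
      · rintro M ⟨hMS, hx0, hz0, hy0, hxz⟩ M' ⟨hMS', hx0', hz0', hy0', hxz'⟩ hx
        replace hx : M 0 0 = M' 0 0 := hx
        have hsum := (key M hMS).2.1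
        have hsum' := (key M' hMS').2.1
        have hz : M 0 2 = M' 0 2 := by rw [← hxz, ← hxz', hx]
        refine inj3 M hMS M' hMS' hx ?_ hz
        have : M 0 1 = -(M 0 0) - M 0 2 := by linear_combination hsum
        have that : M' 0 1 = -(M' 0 0) - M' 0 2 := by linear_combination hsum'
        rw [this, that, hx, hz]
    · rw [if_neg h8]
      have : S4 = ∅ := by
        ext M
        simp only [Set.mem_empty_iff_false, iff_false]
        rintro ⟨hMS, hx0, hz0, hy0, hxz⟩
        obtain ⟨-, hsum, hxs, hys, -, -, -⟩ := key M hMS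
        have hy : -1 * M 0 1 = 2 * M 0 0 := by rw [← hxz] at hsum; linear_combination -hsum
        exact h2ns h8 (aux_two_sq hx0 hxs (hneg1.mul hys) hy)
      rw [this, Set.ncard_empty]
  have hb5 : S5.ncard ≤ (p - 1) * C.ncard := by
    have hprodcard : (N ×ˢ C).ncard = (p - 1) * C.ncard := by
      rw [← Nat.card_coe_set_eq, Nat.card_congr (Equiv.Set.prod N C), Nat.card_prod,
        Nat.card_coe_set_eq, Nat.card_coe_set_eq, hNcard]
    rw [← hprodcard]
    apply Set.ncard_le_ncard_of_injOn (fun M => (M 0 0, M 0 0 * (M 0 2)⁻¹ - 1))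
    · rintro M ⟨hMS, hx0, hz0, hy0, hxz⟩
      obtain ⟨-, hsum, hxs, hys, hzs, hxzs, -⟩ := key M hMS
      have hzinv : IsSquare ((M 0 2)⁻¹) := hzs.inv
      show (M 0 0, M 0 0 * (M 0 2)⁻¹ - 1) ∈ N ×ˢ C
      refine Set.mem_prod.2 ⟨hx0, ?_⟩
      refine ⟨⟨?_, ?_⟩, ⟨?_, ?_⟩, ⟨?_, ?_⟩⟩
      · intro h0
        apply hxz
        have : M 0 0 * (M 0 2)⁻¹ = 1 := by linear_combination h0
        field_simp at this
        exact this
      · have : M 0 0 * (M 0 2)⁻¹ - 1 = (M 0 0 - M 0 2) * (M 0 2)⁻¹ := by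
          field_simp
        rw [this]
        exact hxzs.mul hzinv
      · have : M 0 0 * (M 0 2)⁻¹ - 1 + 1 = M 0 0 * (M 0 2)⁻¹ := by ring
        rw [this]
        exact mul_ne_zero hx0 (inv_ne_zero hz0)
      · have : M 0 0 * (M 0 2)⁻¹ - 1 + 1 = M 0 0 * (M 0 2)⁻¹ := by ring
        rw [this]
        exact hxs.mul hzinv
      · have h2 : M 0 0 * (M 0 2)⁻¹ - 1 + 2 = (-1 * M 0 1) * (M 0 2)⁻¹ := by
          have hy : M 0 1 = -(M 0 0) - M 0 2 := by linear_combination hsum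
          rw [hy]
          field_simp
          ring
        rw [h2]
        intro h0
        rcases mul_eq_zero.1 h0 with h0 | h0
        · rcases mul_eq_zero.1 h0 with h0 | h0
          · exact absurd h0 (by norm_num)
          · exact hy0 h0
        · exact inv_ne_zero hz0 h0
      · have h2 : M 0 0 * (M 0 2)⁻¹ - 1 + 2 = (-1 * M 0 1) * (M 0 2)⁻¹ := by
          have hy : M 0 1 = -(M 0 0) - M 0 2 := by linear_combination hsum
          rw [hy]
          field_simp
          ring
        rw [h2]
        exact (hneg1.mul hys).mul hzinv
    · rintro M ⟨hMS, hx0, hz0, hy0, hxz⟩ M' ⟨hMS', hx0', hz0', hy0', hxz'⟩ hMM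
      replace hMM : (M 0 0, M 0 0 * (M 0 2)⁻¹ - 1) = (M' 0 0, M' 0 0 * (M' 0 2)⁻¹ - 1) := hMM
      have hx : M 0 0 = M' 0 0 := congrArg Prod.fst hMM
      have hn : M 0 0 * (M 0 2)⁻¹ - 1 = M' 0 0 * (M' 0 2)⁻¹ - 1 := congrArg Prod.snd hMM
      have hz : M 0 2 = M' 0 2 := by
        have h1 : M 0 0 * (M 0 2)⁻¹ = M 0 0 * (M' 0 2)⁻¹ := by
          rw [hx] at hn ⊢
          linear_combination hn
        have h2 : (M 0 2)⁻¹ = (M' 0 2)⁻¹ := mul_left_cancel₀ hx0 h1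
        exact inv_injective h2
      have hsum := (key M hMS).2.1
      have hsum' := (key M' hMS').2.1
      refine inj3 M hMS M' hMS' hx ?_ hz
      have : M 0 1 = -(M 0 0) - M 0 2 := by linear_combination hsum
      have that : M' 0 1 = -(M' 0 0) - M' 0 2 := by linear_combination hsum'
      rw [this, that, hx, hz]
  have hchain : S.ncard ≤ S1.ncard + (S2.ncard + (S3.ncard + (S4.ncard + S5.ncard))) := by
    calc S.ncard ≤ (S1 ∪ (S2 ∪ (S3 ∪ (S4 ∪ S5)))).ncard :=
          Set.ncard_le_ncard hcover (Set.toFinite _)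
      _ ≤ S1.ncard + (S2 ∪ (S3 ∪ (S4 ∪ S5))).ncard := Set.ncard_union_le _ _
      _ ≤ S1.ncard + (S2.ncard + (S3 ∪ (S4 ∪ S5)).ncard) := by
          gcongr
          exact Set.ncard_union_le _ _
      _ ≤ S1.ncard + (S2.ncard + (S3.ncard + (S4 ∪ S5).ncard)) := by
          gcongr
          exact Set.ncard_union_le _ _
      _ ≤ S1.ncard + (S2.ncard + (S3.ncard + (S4.ncard + S5.ncard))) := by
          gcongr
          exact Set.ncard_union_le _ _
  show S.ncard ≤ (p - 1) * (C.ncard + 2 * (if p % 8 = 1 then 2 else 1))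
  by_cases h8 : p % 8 = 1
  · rw [if_pos h8] at hb3 hb4 ⊢
    have : (p - 1) * (C.ncard + 2 * 2) = (p-1) + ((p-1) + ((p-1) + ((p-1) + (p-1)*C.ncard))) := by
      ring
    rw [this]
    omega
  · rw [if_neg h8] at hb3 hb4 ⊢
    have : (p - 1) * (C.ncard + 2 * 1) = (p-1) + ((p-1) + (0 + (0 + (p-1)*C.ncard))) := by
      ring
    rw [this]
    omega
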